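/- Let a₁, a₂, a₃ be pairwise coprime positive integers with lᵢ ≥ 2 and coefficients xᵢⱼ of the minimal representations. Then g(a) = l₃a₃ + max{x₂₁a₁, x₁₂a₂} - a₁ - a₂ - a₃. -/

import Mathlib

private lemma sw {A B C L : ℕ}
    (h : IsLeast {l : ℕ | 0 < l ∧ ∃ x y : ℕ, l * A = x * B + y * C} L) :
    IsLeast {l : ℕ | 0 < l ∧ ∃ x y : ℕ, l * A = x * C + y * B} L := by
  obtain ⟨⟨hp, x, y, hxy⟩, hub⟩ := h
  refine ⟨⟨hp, y, x, by rw [hxy, Nat.add_comm]⟩, ?_⟩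
  rintro l ⟨hp', x', y', h'⟩
  exact hub ⟨hp', y', x', by rw [h', Nat.add_comm]⟩

private lemma lZ {m u v Lu Lv : ℕ} (hm : 2 ≤ m)
    (hum : Nat.Coprime u m) (hvm : Nat.Coprime v m)
    (hLv : IsLeast {l : ℕ | 0 < l ∧ ∃ x y : ℕ, l * v = x * u + y * m} Lv)
    (hLu : IsLeast {l : ℕ | 0 < l ∧ ∃ x y : ℕ, l * u = x * v + y * m} Lu)
    (h2 : 2 ≤ Lu) : Lv < m := by
  have hm0 : 0 < m := by omega
  have hφ : 0 < Nat.totient m := Nat.totient_pos.mpr hm0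
  have hvb : v * v ^ (Nat.totient m - 1) ≡ 1 [MOD m] := by
    have h := Nat.ModEq.pow_totient hvm
    rwa [show Nat.totient m = (Nat.totient m - 1) + 1 by omega, pow_succ, mul_comm] at h
  set b := v ^ (Nat.totient m - 1) with hb
  set l0 := (u * b) % m with hl0
  have hl0lt : l0 < m := Nat.mod_lt _ hm0
  have h0 : l0 * v ≡ u [MOD m] := by
    calc l0 * v ≡ (u * b) * v [MOD m] := (Nat.mod_modEq (u * b) m).mul_right v
    _ = u * (v * b) := by ring
    _ ≡ u * 1 [MOD m] := hvb.mul_left u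
    _ = u := by ring
  have hl0pos : 0 < l0 := by
    rcases Nat.eq_zero_or_pos l0 with h | h
    · exfalso
      rw [h] at h0
      have h0' : u % m = 0 := by simpa [Nat.ModEq] using h0.symm
      have hdvd : m ∣ u := Nat.dvd_of_mod_eq_zero h0'
      have : m ∣ 1 := hum ▸ Nat.dvd_gcd hdvd dvd_rfl
      have := Nat.le_of_dvd one_pos this
      omega
    · exact h
  rcases le_or_gt u (l0 * v) with hge | hlt
  · have hdvd : m ∣ l0 * v - u := (Nat.modEq_iff_dvd' hge).mp h0.symm
    obtain ⟨s, hs⟩ := hdvd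
    have heq : l0 * v = m * s + u := Nat.sub_eq_iff_eq_add hge |>.mp hs
    have hle := hLv.2 ⟨hl0pos, 1, s, by linarith⟩
    omega
  · have hdvd : m ∣ u - l0 * v := (Nat.modEq_iff_dvd' hlt.le).mp h0
    obtain ⟨s, hs⟩ := hdvd
    have heq : u = m * s + l0 * v := Nat.sub_eq_iff_eq_add hlt.le |>.mp hs
    have : Lu ≤ 1 := hLu.2 ⟨one_pos, l0, s, by linarith⟩
    omega

set_option maxHeartbeats 4000000 in
theorem frobenius_number_unsymmetric (a1 a2 a3 l1 l2 l3 x12 x13 x21 x23 x31 x32 : ℕ)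
    (ha1 : 0 < a1) (ha2 : 0 < a2) (ha3 : 0 < a3)
    (h12 : Nat.Coprime a1 a2) (h13 : Nat.Coprime a1 a3) (h23 : Nat.Coprime a2 a3)
    (hl1 : IsLeast {l : ℕ | 0 < l ∧ ∃ x y : ℕ, l * a1 = x * a2 + y * a3} l1)
    (hl2 : IsLeast {l : ℕ | 0 < l ∧ ∃ x y : ℕ, l * a2 = x * a1 + y * a3} l2)
    (hl3 : IsLeast {l : ℕ | 0 < l ∧ ∃ x y : ℕ, l * a3 = x * a1 + y * a2} l3)
    (h2l1 : 2 ≤ l1) (h2l2 : 2 ≤ l2) (h2l3 : 2 ≤ l3)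
    (hx1 : l1 * a1 = x12 * a2 + x13 * a3)
    (hx2 : l2 * a2 = x21 * a1 + x23 * a3)
    (hx3 : l3 * a3 = x31 * a1 + x32 * a2) :
    IsGreatest {z : ℕ | ¬∃ y1 y2 y3 : ℕ, z = y1 * a1 + y2 * a2 + y3 * a3}
      (l3 * a3 + max (x21 * a1) (x12 * a2) - (a1 + a2 + a3)) := by
  classical
  have hl1' := sw hl1
  have hl2' := sw hl2
  have hl3' := sw hl3
  -- all aᵢ ≥ 2
  have ha1' : 2 ≤ a1 := by
    by_contra h
    have h1 : a1 = 1 := by omega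
    have := hl2.2 ⟨one_pos, a2, 0, by rw [h1]; ring⟩
    omega
  have ha2' : 2 ≤ a2 := by
    by_contra h
    have h1 : a2 = 1 := by omega
    have := hl1.2 ⟨one_pos, a1, 0, by rw [h1]; ring⟩
    omega
  have ha3' : 2 ≤ a3 := by
    by_contra h
    have h1 : a3 = 1 := by omega
    have := hl1.2 ⟨one_pos, 0, a1, by rw [h1]; ring⟩
    omega
  -- six bounds lᵢ < aⱼ
  have hb1a2 : l1 < a2 := lZ ha2' h23.symm h12 hl1' hl3 h2l3
  have hb1a3 : l1 < a3 := lZ ha3' h23 h13 hl1 hl2 h2l2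
  have hb2a1 : l2 < a1 := lZ ha1' h13.symm h12.symm hl2' hl3' h2l3
  have hb2a3 : l2 < a3 := lZ ha3' h13 h23 hl2 hl1 h2l1
  have hb3a1 : l3 < a1 := lZ ha1' h12.symm h13.symm hl3' hl2' h2l2
  have hb3a2 : l3 < a2 := lZ ha2' h12 h23.symm hl3 hl1' h2l1
  -- positivity of all coefficients
  have p12 : 0 < x12 := by
    rcases Nat.eq_zero_or_pos x12 with h | h
    · exfalso
      rw [h, Nat.zero_mul, Nat.zero_add] at hx1
      have hdvd : a3 ∣ l1 := (Nat.Coprime.dvd_of_dvd_mul_right h13.symm) ⟨x13, by rw [hx1]; ring⟩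
      have := Nat.le_of_dvd (by omega : 0 < l1) hdvd
      omega
    · exact h
  have p13 : 0 < x13 := by
    rcases Nat.eq_zero_or_pos x13 with h | h
    · exfalso
      rw [h, Nat.zero_mul, Nat.add_zero] at hx1
      have hdvd : a2 ∣ l1 := (Nat.Coprime.dvd_of_dvd_mul_right h12.symm) ⟨x12, by rw [hx1]; ring⟩
      have := Nat.le_of_dvd (by omega : 0 < l1) hdvd
      omega
    · exact h
  have p21 : 0 < x21 := by
    rcases Nat.eq_zero_or_pos x21 with h | h
    · exfalso
      rw [h, Nat.zero_mul, Nat.zero_add] at hx2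
      have hdvd : a3 ∣ l2 := (Nat.Coprime.dvd_of_dvd_mul_right h23.symm) ⟨x23, by rw [hx2]; ring⟩
      have := Nat.le_of_dvd (by omega : 0 < l2) hdvd
      omega
    · exact h
  have p23 : 0 < x23 := by
    rcases Nat.eq_zero_or_pos x23 with h | h
    · exfalso
      rw [h, Nat.zero_mul, Nat.add_zero] at hx2
      have hdvd : a1 ∣ l2 := (Nat.Coprime.dvd_of_dvd_mul_right h12) ⟨x21, by rw [hx2]; ring⟩
      have := Nat.le_of_dvd (by omega : 0 < l2) hdvd
      omega
    · exact h
  have p31 : 0 < x31 := by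
    rcases Nat.eq_zero_or_pos x31 with h | h
    · exfalso
      rw [h, Nat.zero_mul, Nat.zero_add] at hx3
      have hdvd : a2 ∣ l3 := (Nat.Coprime.dvd_of_dvd_mul_right h23) ⟨x32, by rw [hx3]; ring⟩
      have := Nat.le_of_dvd (by omega : 0 < l3) hdvd
      omega
    · exact h
  have p32 : 0 < x32 := by
    rcases Nat.eq_zero_or_pos x32 with h | h
    · exfalso
      rw [h, Nat.zero_mul, Nat.add_zero] at hx3
      have hdvd : a1 ∣ l3 := (Nat.Coprime.dvd_of_dvd_mul_right h13) ⟨x31, by rw [hx3]; ring⟩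
      have := Nat.le_of_dvd (by omega : 0 < l3) hdvd
      omega
    · exact h
  -- coefficient bounds
  have q31 : x31 < l1 := by
    by_contra hq
    push_neg at hq
    obtain ⟨e, he⟩ : ∃ e, x31 = l1 + e := ⟨x31 - l1, by omega⟩
    rw [he] at hx3
    rcases le_or_gt l3 x13 with hc | hc
    · obtain ⟨f, hf⟩ : ∃ f, x13 = l3 + f := ⟨x13 - l3, by omega⟩
      rw [hf] at hx1
      have hpos : 1 * 1 ≤ x12 * a2 := Nat.mul_le_mul p12 (by omega)
      linarith [hx1, hx3, hpos, Nat.zero_le (e * a1), Nat.zero_le (x32 * a2), Nat.zero_le (f * a3)]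
    · obtain ⟨f, hf⟩ : ∃ f, l3 = x13 + f := ⟨l3 - x13, by omega⟩
      rw [hf] at hx3
      have heq : f * a3 = e * a1 + (x12 + x32) * a2 := by linarith [hx1, hx3]
      have := hl3.2 ⟨(by omega : 0 < f), e, x12 + x32, heq⟩
      omega
  have q13 : x13 < l3 := by
    by_contra hq
    push_neg at hq
    obtain ⟨f, hf⟩ : ∃ f, x13 = l3 + f := ⟨x13 - l3, by omega⟩
    rw [hf] at hx1
    rcases le_or_gt l1 x31 with hc | hc
    · obtain ⟨e, he⟩ : ∃ e, x31 = l1 + e := ⟨x31 - l1, by omega⟩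
      rw [he] at hx3
      have hpos : 1 * 1 ≤ x12 * a2 := Nat.mul_le_mul p12 (by omega)
      linarith [hx1, hx3, hpos, Nat.zero_le (e * a1), Nat.zero_le (x32 * a2), Nat.zero_le (f * a3)]
    · obtain ⟨e, he⟩ : ∃ e, l1 = x31 + e := ⟨l1 - x31, by omega⟩
      rw [he] at hx1
      have heq : e * a1 = (x12 + x32) * a2 + f * a3 := by linarith [hx1, hx3]
      have := hl1.2 ⟨(by omega : 0 < e), x12 + x32, f, heq⟩
      omega
  have q21 : x21 < l1 := by
    by_contra hq
    push_neg at hq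
    obtain ⟨e, he⟩ : ∃ e, x21 = l1 + e := ⟨x21 - l1, by omega⟩
    rw [he] at hx2
    rcases le_or_gt l2 x12 with hc | hc
    · obtain ⟨g, hg⟩ : ∃ g, x12 = l2 + g := ⟨x12 - l2, by omega⟩
      rw [hg] at hx1
      have hpos : 1 * 1 ≤ x13 * a3 := Nat.mul_le_mul p13 (by omega)
      linarith [hx1, hx2, hpos, Nat.zero_le (e * a1), Nat.zero_le (g * a2), Nat.zero_le (x23 * a3)]
    · obtain ⟨g, hg⟩ : ∃ g, l2 = x12 + g := ⟨l2 - x12, by omega⟩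
      rw [hg] at hx2
      have heq : g * a2 = e * a1 + (x13 + x23) * a3 := by linarith [hx1, hx2]
      have := hl2.2 ⟨(by omega : 0 < g), e, x13 + x23, heq⟩
      omega
  have q12 : x12 < l2 := by
    by_contra hq
    push_neg at hq
    obtain ⟨g, hg⟩ : ∃ g, x12 = l2 + g := ⟨x12 - l2, by omega⟩
    rw [hg] at hx1
    rcases le_or_gt l1 x21 with hc | hc
    · obtain ⟨e, he⟩ : ∃ e, x21 = l1 + e := ⟨x21 - l1, by omega⟩
      rw [he] at hx2
      have hpos : 1 * 1 ≤ x13 * a3 := Nat.mul_le_mul p13 (by omega)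
      linarith [hx1, hx2, hpos, Nat.zero_le (e * a1), Nat.zero_le (g * a2), Nat.zero_le (x23 * a3)]
    · obtain ⟨e, he⟩ : ∃ e, l1 = x21 + e := ⟨l1 - x21, by omega⟩
      rw [he] at hx1
      have heq : e * a1 = g * a2 + (x13 + x23) * a3 := by linarith [hx1, hx2]
      have := hl1.2 ⟨(by omega : 0 < e), g, x13 + x23, heq⟩
      omega
  have q32 : x32 < l2 := by
    by_contra hq
    push_neg at hq
    obtain ⟨g, hg⟩ : ∃ g, x32 = l2 + g := ⟨x32 - l2, by omega⟩
    rw [hg] at hx3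
    rcases le_or_gt l3 x23 with hc | hc
    · obtain ⟨f, hf⟩ : ∃ f, x23 = l3 + f := ⟨x23 - l3, by omega⟩
      rw [hf] at hx2
      have hpos : 1 * 1 ≤ x21 * a1 := Nat.mul_le_mul p21 (by omega)
      linarith [hx2, hx3, hpos, Nat.zero_le (x31 * a1), Nat.zero_le (g * a2), Nat.zero_le (f * a3)]
    · obtain ⟨f, hf⟩ : ∃ f, l3 = x23 + f := ⟨l3 - x23, by omega⟩
      rw [hf] at hx3
      have heq : f * a3 = (x31 + x21) * a1 + g * a2 := by linarith [hx2, hx3]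
      have := hl3.2 ⟨(by omega : 0 < f), x31 + x21, g, heq⟩
      omega
  have q23 : x23 < l3 := by
    by_contra hq
    push_neg at hq
    obtain ⟨f, hf⟩ : ∃ f, x23 = l3 + f := ⟨x23 - l3, by omega⟩
    rw [hf] at hx2
    rcases le_or_gt l2 x32 with hc | hc
    · obtain ⟨g, hg⟩ : ∃ g, x32 = l2 + g := ⟨x32 - l2, by omega⟩
      rw [hg] at hx3
      have hpos : 1 * 1 ≤ x21 * a1 := Nat.mul_le_mul p21 (by omega)
      linarith [hx2, hx3, hpos, Nat.zero_le (x31 * a1), Nat.zero_le (g * a2), Nat.zero_le (f * a3)]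
    · obtain ⟨g, hg⟩ : ∃ g, l2 = x32 + g := ⟨l2 - x32, by omega⟩
      rw [hg] at hx2
      have heq : g * a2 = (x21 + x31) * a1 + f * a3 := by linarith [hx2, hx3]
      have := hl2.2 ⟨(by omega : 0 < g), x21 + x31, f, heq⟩
      omega
  -- column sums
  have e12 : l1 = x21 + x31 ∧ l2 = x12 + x32 := by
    rcases le_or_gt (x21 + x31) l1 with c1 | c1 <;>
      rcases le_or_gt (x12 + x32) l2 with c2 | c2 <;>
        rcases le_or_gt (x13 + x23) l3 with c3 | c3
    · -- ≤ ≤ ≤ : all slack, must be zero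
      obtain ⟨d1, hd1⟩ : ∃ d, l1 = x21 + x31 + d := ⟨l1 - (x21 + x31), by omega⟩
      obtain ⟨d2, hd2⟩ : ∃ d, l2 = x12 + x32 + d := ⟨l2 - (x12 + x32), by omega⟩
      obtain ⟨d3, hd3⟩ : ∃ d, l3 = x13 + x23 + d := ⟨l3 - (x13 + x23), by omega⟩
      have hm1 : l1 * a1 = (x21 + x31 + d1) * a1 := by rw [hd1]
      have hm2 : l2 * a2 = (x12 + x32 + d2) * a2 := by rw [hd2]
      have hm3 : l3 * a3 = (x13 + x23 + d3) * a3 := by rw [hd3]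
      have h1 : d1 * a1 = 0 := by
        linarith [hx1, hx2, hx3, hm1, hm2, hm3, Nat.zero_le (d1 * a1), Nat.zero_le (d2 * a2), Nat.zero_le (d3 * a3)]
      have h2 : d2 * a2 = 0 := by
        linarith [hx1, hx2, hx3, hm1, hm2, hm3, Nat.zero_le (d1 * a1), Nat.zero_le (d2 * a2), Nat.zero_le (d3 * a3)]
      have h1' : d1 = 0 := by rcases Nat.mul_eq_zero.mp h1 with h | h; exact h; omega
      have h2' : d2 = 0 := by rcases Nat.mul_eq_zero.mp h2 with h | h; exact h; omega
      omega
    · -- ≤ ≤ >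
      obtain ⟨d1, hd1⟩ : ∃ d, l1 = x21 + x31 + d := ⟨l1 - (x21 + x31), by omega⟩
      obtain ⟨d2, hd2⟩ : ∃ d, l2 = x12 + x32 + d := ⟨l2 - (x12 + x32), by omega⟩
      obtain ⟨f3, hf3⟩ : ∃ f, x13 + x23 = l3 + f := ⟨x13 + x23 - l3, by omega⟩
      have hm1 : l1 * a1 = (x21 + x31 + d1) * a1 := by rw [hd1]
      have hm2 : l2 * a2 = (x12 + x32 + d2) * a2 := by rw [hd2]
      have hm3 : (x13 + x23) * a3 = (l3 + f3) * a3 := by rw [hf3]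
      have heq : f3 * a3 = d1 * a1 + d2 * a2 := by linarith [hx1, hx2, hx3, hm1, hm2, hm3]
      have := hl3.2 ⟨(by omega : 0 < f3), d1, d2, heq⟩
      omega
    · -- ≤ > ≤
      obtain ⟨d1, hd1⟩ : ∃ d, l1 = x21 + x31 + d := ⟨l1 - (x21 + x31), by omega⟩
      obtain ⟨g2, hg2⟩ : ∃ g, x12 + x32 = l2 + g := ⟨x12 + x32 - l2, by omega⟩
      obtain ⟨d3, hd3⟩ : ∃ d, l3 = x13 + x23 + d := ⟨l3 - (x13 + x23), by omega⟩
      have hm1 : l1 * a1 = (x21 + x31 + d1) * a1 := by rw [hd1]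
      have hm2 : (x12 + x32) * a2 = (l2 + g2) * a2 := by rw [hg2]
      have hm3 : l3 * a3 = (x13 + x23 + d3) * a3 := by rw [hd3]
      have heq : g2 * a2 = d1 * a1 + d3 * a3 := by linarith [hx1, hx2, hx3, hm1, hm2, hm3]
      have := hl2.2 ⟨(by omega : 0 < g2), d1, d3, heq⟩
      omega
    · -- ≤ > >
      obtain ⟨d1, hd1⟩ : ∃ d, l1 = x21 + x31 + d := ⟨l1 - (x21 + x31), by omega⟩
      obtain ⟨g2, hg2⟩ : ∃ g, x12 + x32 = l2 + g := ⟨x12 + x32 - l2, by omega⟩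
      obtain ⟨f3, hf3⟩ : ∃ f, x13 + x23 = l3 + f := ⟨x13 + x23 - l3, by omega⟩
      have hm1 : l1 * a1 = (x21 + x31 + d1) * a1 := by rw [hd1]
      have hm2 : (x12 + x32) * a2 = (l2 + g2) * a2 := by rw [hg2]
      have hm3 : (x13 + x23) * a3 = (l3 + f3) * a3 := by rw [hf3]
      have heq : d1 * a1 = g2 * a2 + f3 * a3 := by linarith [hx1, hx2, hx3, hm1, hm2, hm3]
      have hd1pos : 0 < d1 := by
        rcases Nat.eq_zero_or_pos d1 with h | h
        · exfalso
          rw [h] at heq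
          have hpos : 1 * 1 ≤ g2 * a2 := Nat.mul_le_mul (by omega) (by omega)
          linarith [Nat.zero_le (f3 * a3)]
        · exact h
      have := hl1.2 ⟨hd1pos, g2, f3, heq⟩
      omega
    · -- > ≤ ≤
      obtain ⟨e1, he1⟩ : ∃ e, x21 + x31 = l1 + e := ⟨x21 + x31 - l1, by omega⟩
      obtain ⟨d2, hd2⟩ : ∃ d, l2 = x12 + x32 + d := ⟨l2 - (x12 + x32), by omega⟩
      obtain ⟨d3, hd3⟩ : ∃ d, l3 = x13 + x23 + d := ⟨l3 - (x13 + x23), by omega⟩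
      have hm1 : (x21 + x31) * a1 = (l1 + e1) * a1 := by rw [he1]
      have hm2 : l2 * a2 = (x12 + x32 + d2) * a2 := by rw [hd2]
      have hm3 : l3 * a3 = (x13 + x23 + d3) * a3 := by rw [hd3]
      have heq : e1 * a1 = d2 * a2 + d3 * a3 := by linarith [hx1, hx2, hx3, hm1, hm2, hm3]
      have := hl1.2 ⟨(by omega : 0 < e1), d2, d3, heq⟩
      omega
    · -- > ≤ >
      obtain ⟨e1, he1⟩ : ∃ e, x21 + x31 = l1 + e := ⟨x21 + x31 - l1, by omega⟩
      obtain ⟨d2, hd2⟩ : ∃ d, l2 = x12 + x32 + d := ⟨l2 - (x12 + x32), by omega⟩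
      obtain ⟨f3, hf3⟩ : ∃ f, x13 + x23 = l3 + f := ⟨x13 + x23 - l3, by omega⟩
      have hm1 : (x21 + x31) * a1 = (l1 + e1) * a1 := by rw [he1]
      have hm2 : l2 * a2 = (x12 + x32 + d2) * a2 := by rw [hd2]
      have hm3 : (x13 + x23) * a3 = (l3 + f3) * a3 := by rw [hf3]
      have heq : d2 * a2 = e1 * a1 + f3 * a3 := by linarith [hx1, hx2, hx3, hm1, hm2, hm3]
      have hd2pos : 0 < d2 := by
        rcases Nat.eq_zero_or_pos d2 with h | h
        · exfalso
          rw [h] at heq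
          have hpos : 1 * 1 ≤ e1 * a1 := Nat.mul_le_mul (by omega) (by omega)
          linarith [Nat.zero_le (f3 * a3)]
        · exact h
      have := hl2.2 ⟨hd2pos, e1, f3, heq⟩
      omega
    · -- > > ≤
      obtain ⟨e1, he1⟩ : ∃ e, x21 + x31 = l1 + e := ⟨x21 + x31 - l1, by omega⟩
      obtain ⟨g2, hg2⟩ : ∃ g, x12 + x32 = l2 + g := ⟨x12 + x32 - l2, by omega⟩
      obtain ⟨d3, hd3⟩ : ∃ d, l3 = x13 + x23 + d := ⟨l3 - (x13 + x23), by omega⟩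
      have hm1 : (x21 + x31) * a1 = (l1 + e1) * a1 := by rw [he1]
      have hm2 : (x12 + x32) * a2 = (l2 + g2) * a2 := by rw [hg2]
      have hm3 : l3 * a3 = (x13 + x23 + d3) * a3 := by rw [hd3]
      have heq : d3 * a3 = e1 * a1 + g2 * a2 := by linarith [hx1, hx2, hx3, hm1, hm2, hm3]
      have hd3pos : 0 < d3 := by
        rcases Nat.eq_zero_or_pos d3 with h | h
        · exfalso
          rw [h] at heq
          have hpos : 1 * 1 ≤ e1 * a1 := Nat.mul_le_mul (by omega) (by omega)
          linarith [Nat.zero_le (g2 * a2)]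
        · exact h
      have := hl3.2 ⟨hd3pos, e1, g2, heq⟩
      omega
    · -- > > >
      obtain ⟨e1, he1⟩ : ∃ e, x21 + x31 = l1 + e := ⟨x21 + x31 - l1, by omega⟩
      obtain ⟨g2, hg2⟩ : ∃ g, x12 + x32 = l2 + g := ⟨x12 + x32 - l2, by omega⟩
      obtain ⟨f3, hf3⟩ : ∃ f, x13 + x23 = l3 + f := ⟨x13 + x23 - l3, by omega⟩
      have hm1 : (x21 + x31) * a1 = (l1 + e1) * a1 := by rw [he1]
      have hm2 : (x12 + x32) * a2 = (l2 + g2) * a2 := by rw [hg2]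
      have hm3 : (x13 + x23) * a3 = (l3 + f3) * a3 := by rw [hf3]
      have hpos : 1 * 1 ≤ e1 * a1 := Nat.mul_le_mul (by omega) (by omega)
      linarith [hx1, hx2, hx3, hm1, hm2, hm3, hpos, Nat.zero_le (g2 * a2), Nat.zero_le (f3 * a3)]
  -- injectivity of L-shape values modulo a3
  have INJ : ∀ X Y X' Y' K : ℕ, X < l1 → Y < l2 → (X < x31 ∨ Y < x32) → 0 < K →
      X * a1 + Y * a2 = X' * a1 + Y' * a2 + K * a3 → False := by
    intro X Y X' Y' K hX hY hexc hK hE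
    rcases le_or_gt X' X with hx | hx <;> rcases le_or_gt Y' Y with hy | hy
    · -- X' ≤ X, Y' ≤ Y
      obtain ⟨d, rfl⟩ : ∃ d, X = X' + d := ⟨X - X', by omega⟩
      obtain ⟨e, rfl⟩ : ∃ e, Y = Y' + e := ⟨Y - Y', by omega⟩
      have heq : K * a3 = d * a1 + e * a2 := by linarith [hE]
      have hl3K : l3 ≤ K := hl3.2 ⟨hK, d, e, heq⟩
      rcases le_or_gt x31 d with h31 | h31 <;> rcases le_or_gt x32 e with h32 | h32
      · rcases hexc with h | h <;> omega
      · -- d ≥ x31, e < x32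
        obtain ⟨n, rfl⟩ : ∃ n, d = x31 + n := ⟨d - x31, by omega⟩
        obtain ⟨m, hm⟩ : ∃ m, x32 = e + m := ⟨x32 - e, by omega⟩
        obtain ⟨j, rfl⟩ : ∃ j, K = l3 + j := ⟨K - l3, by omega⟩
        have hm3 : x32 * a2 = (e + m) * a2 := by rw [hm]
        have heq2 : n * a1 = m * a2 + j * a3 := by linarith [heq, hx3, hm3]
        have hnpos : 0 < n := by
          rcases Nat.eq_zero_or_pos n with h0 | h0
          · exfalso
            rw [h0] at heq2
            have hpos : 1 * 1 ≤ m * a2 := Nat.mul_le_mul (by omega) (by omega)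
            linarith [heq2, hpos, Nat.zero_le (j * a3)]
          · exact h0
        have := hl1.2 ⟨hnpos, m, j, heq2⟩
        omega
      · -- d < x31, e ≥ x32
        obtain ⟨m, rfl⟩ : ∃ m, e = x32 + m := ⟨e - x32, by omega⟩
        obtain ⟨n, hn⟩ : ∃ n, x31 = d + n := ⟨x31 - d, by omega⟩
        obtain ⟨j, rfl⟩ : ∃ j, K = l3 + j := ⟨K - l3, by omega⟩
        have hn1 : x31 * a1 = (d + n) * a1 := by rw [hn]
        have heq2 : m * a2 = n * a1 + j * a3 := by linarith [heq, hx3, hn1]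
        have hmpos : 0 < m := by
          rcases Nat.eq_zero_or_pos m with h0 | h0
          · exfalso
            rw [h0] at heq2
            have hpos : 1 * 1 ≤ n * a1 := Nat.mul_le_mul (by omega) (by omega)
            linarith [heq2, hpos, Nat.zero_le (j * a3)]
          · exact h0
        have := hl2.2 ⟨hmpos, n, j, heq2⟩
        omega
      · -- d < x31, e < x32
        have h1 : (d + 1) * a1 ≤ x31 * a1 := Nat.mul_le_mul (by omega) (by omega)
        have h2 : (e + 1) * a2 ≤ x32 * a2 := Nat.mul_le_mul (by omega) (by omega)
        have h3 : l3 * a3 ≤ K * a3 := Nat.mul_le_mul hl3K (by omega)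
        linarith [heq, hx3, h1, h2, h3]
    · -- X' ≤ X, Y < Y'
      obtain ⟨d, rfl⟩ : ∃ d, X = X' + d := ⟨X - X', by omega⟩
      obtain ⟨e, he'⟩ : ∃ e, Y' = Y + e := ⟨Y' - Y, by omega⟩
      have he2 : Y' * a2 = (Y + e) * a2 := by rw [he']
      have heq : d * a1 = e * a2 + K * a3 := by linarith [hE, he2]
      have hdpos : 0 < d := by
        rcases Nat.eq_zero_or_pos d with h0 | h0
        · exfalso
          rw [h0] at heq
          have hpos : 1 * 1 ≤ K * a3 := Nat.mul_le_mul (by omega) (by omega)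
          linarith [heq, hpos, Nat.zero_le (e * a2)]
        · exact h0
      have := hl1.2 ⟨hdpos, e, K, heq⟩
      omega
    · -- X < X', Y' ≤ Y
      obtain ⟨e, rfl⟩ : ∃ e, Y = Y' + e := ⟨Y - Y', by omega⟩
      obtain ⟨d, hd⟩ : ∃ d, X' = X + d := ⟨X' - X, by omega⟩
      have hd2 : X' * a1 = (X + d) * a1 := by rw [hd]
      have heq : e * a2 = d * a1 + K * a3 := by linarith [hE, hd2]
      have hepos : 0 < e := by
        rcases Nat.eq_zero_or_pos e with h0 | h0
        · exfalso
          rw [h0] at heq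
          have hpos : 1 * 1 ≤ K * a3 := Nat.mul_le_mul (by omega) (by omega)
          linarith [heq, hpos, Nat.zero_le (d * a1)]
        · exact h0
      have := hl2.2 ⟨hepos, d, K, heq⟩
      omega
    · -- X < X', Y < Y'
      obtain ⟨d, hd⟩ : ∃ d, X' = X + d := ⟨X' - X, by omega⟩
      obtain ⟨e, he'⟩ : ∃ e, Y' = Y + e := ⟨Y' - Y, by omega⟩
      have hd2 : X' * a1 = (X + d) * a1 := by rw [hd]
      have he2 : Y' * a2 = (Y + e) * a2 := by rw [he']
      have hpos1 : 1 * 1 ≤ d * a1 := Nat.mul_le_mul (by omega) (by omega)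
      have hpos2 : 1 * 1 ≤ K * a3 := Nat.mul_le_mul (by omega) (by omega)
      linarith [hE, hd2, he2, hpos1, hpos2, Nat.zero_le (e * a2)]
  -- reduction: every residue class mod a3 has a representative in the L-shape
  have RED : ∀ z : ℕ, ∃ x y : ℕ,
      (x * a1 + y * a2) % a3 = z % a3 ∧ x < l1 ∧ y < l2 ∧ (x < x31 ∨ y < x32) := by
    intro z
    have hφ : 0 < Nat.totient a3 := Nat.totient_pos.mpr (by omega)
    have hb : a1 * a1 ^ (Nat.totient a3 - 1) ≡ 1 [MOD a3] := by
      have h := Nat.ModEq.pow_totient h13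
      rwa [show Nat.totient a3 = (Nat.totient a3 - 1) + 1 by omega, pow_succ'] at h
    have hPex : ∃ v : ℕ, (∃ x y : ℕ, v = x * a1 + y * a2) ∧ v % a3 = z % a3 := by
      refine ⟨z * a1 ^ (Nat.totient a3 - 1) * a1, ⟨z * a1 ^ (Nat.totient a3 - 1), 0, by ring⟩, ?_⟩
      have h2 : z * (a1 * a1 ^ (Nat.totient a3 - 1)) ≡ z * 1 [MOD a3] := hb.mul_left z
      calc (z * a1 ^ (Nat.totient a3 - 1) * a1) % a3
          = (z * (a1 * a1 ^ (Nat.totient a3 - 1))) % a3 := by ring_nf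
        _ = (z * 1) % a3 := h2
        _ = z % a3 := by rw [mul_one]
    obtain ⟨⟨x, y, hxy⟩, hmod⟩ := Nat.find_spec hPex
    refine ⟨x, y, by rw [← hxy]; exact hmod, ?_, ?_, ?_⟩
    · -- x < l1
      by_contra hcon
      push_neg at hcon
      obtain ⟨d, hd⟩ : ∃ d, x = l1 + d := ⟨x - l1, by omega⟩
      have hd2 : x * a1 = (l1 + d) * a1 := by rw [hd]
      have hveq : Nat.find hPex = (d * a1 + (y + x12) * a2) + x13 * a3 := by
        linarith [hxy, hx1, hd2]
      have hvlt : d * a1 + (y + x12) * a2 < Nat.find hPex := by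
        have hpos : 1 * 1 ≤ x13 * a3 := Nat.mul_le_mul (by omega) (by omega)
        linarith [hveq]
      refine Nat.find_min hPex hvlt ⟨⟨d, y + x12, rfl⟩, ?_⟩
      have h5 := Nat.add_mul_mod_self_right (d * a1 + (y + x12) * a2) x13 a3
      rw [← hveq] at h5
      exact h5.symm.trans hmod
    · -- y < l2
      by_contra hcon
      push_neg at hcon
      obtain ⟨e, he'⟩ : ∃ e, y = l2 + e := ⟨y - l2, by omega⟩
      have he2 : y * a2 = (l2 + e) * a2 := by rw [he']
      have hveq : Nat.find hPex = ((x + x21) * a1 + e * a2) + x23 * a3 := by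
        linarith [hxy, hx2, he2]
      have hvlt : (x + x21) * a1 + e * a2 < Nat.find hPex := by
        have hpos : 1 * 1 ≤ x23 * a3 := Nat.mul_le_mul (by omega) (by omega)
        linarith [hveq]
      refine Nat.find_min hPex hvlt ⟨⟨x + x21, e, rfl⟩, ?_⟩
      have h5 := Nat.add_mul_mod_self_right ((x + x21) * a1 + e * a2) x23 a3
      rw [← hveq] at h5
      exact h5.symm.trans hmod
    · -- x < x31 ∨ y < x32
      by_contra hcon
      push_neg at hcon
      obtain ⟨hc1, hc2⟩ := hcon
      obtain ⟨d, hd⟩ : ∃ d, x = x31 + d := ⟨x - x31, by omega⟩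
      obtain ⟨e, he'⟩ : ∃ e, y = x32 + e := ⟨y - x32, by omega⟩
      have hd2 : x * a1 = (x31 + d) * a1 := by rw [hd]
      have he2 : y * a2 = (x32 + e) * a2 := by rw [he']
      have hveq : Nat.find hPex = (d * a1 + e * a2) + l3 * a3 := by
        linarith [hxy, hx3, hd2, he2]
      have hvlt : d * a1 + e * a2 < Nat.find hPex := by
        have hpos : 1 * 1 ≤ l3 * a3 := Nat.mul_le_mul (by omega) (by omega)
        linarith [hveq]
      refine Nat.find_min hPex hvlt ⟨⟨d, e, rfl⟩, ?_⟩
      have h5 := Nat.add_mul_mod_self_right (d * a1 + e * a2) l3 a3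
      rw [← hveq] at h5
      exact h5.symm.trans hmod
  -- decompose x31 = s1+1, x32 = s2+1, l1 = x21+x31, l2 = x12+x32
  obtain ⟨s1, rfl⟩ : ∃ s, x31 = s + 1 := ⟨x31 - 1, by omega⟩
  obtain ⟨s2, rfl⟩ : ∃ s, x32 = s + 1 := ⟨x32 - 1, by omega⟩
  obtain ⟨hE1, hE2⟩ := e12
  subst hE1
  subst hE2
  -- corner identities
  have hA : l3 * a3 + x21 * a1 = (x21 + s1) * a1 + s2 * a2 + (a1 + a2) := by linarith [hx3]
  have hB : l3 * a3 + x12 * a2 = s1 * a1 + (x12 + s2) * a2 + (a1 + a2) := by linarith [hx3]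
  have hval : l3 * a3 + max (x21 * a1) (x12 * a2) =
      (a1 + a2) + max ((x21 + s1) * a1 + s2 * a2) (s1 * a1 + (x12 + s2) * a2) := by
    rcases le_total (x21 * a1) (x12 * a2) with h | h
    · rw [max_eq_right h, max_eq_right (show (x21 + s1) * a1 + s2 * a2 ≤
        s1 * a1 + (x12 + s2) * a2 by linarith [hA, hB, h])]
      linarith [hB]
    · rw [max_eq_left h, max_eq_left (show s1 * a1 + (x12 + s2) * a2 ≤
        (x21 + s1) * a1 + s2 * a2 by linarith [hA, hB, h])]
      linarith [hA]
  have WLE : ∀ x y : ℕ, x < x21 + (s1 + 1) → y < x12 + (s2 + 1) → (x < s1 + 1 ∨ y < s2 + 1) →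
      x * a1 + y * a2 ≤ max ((x21 + s1) * a1 + s2 * a2) (s1 * a1 + (x12 + s2) * a2) := by
    intro x y hx hy hexc
    rcases hexc with h | h
    · have h1 : x * a1 ≤ s1 * a1 := Nat.mul_le_mul (by omega) (le_refl a1)
      have h2 : y * a2 ≤ (x12 + s2) * a2 := Nat.mul_le_mul (by omega) (le_refl a2)
      exact le_trans (by linarith) (le_max_right _ _)
    · have h1 : x * a1 ≤ (x21 + s1) * a1 := Nat.mul_le_mul (by omega) (le_refl a1)
      have h2 : y * a2 ≤ s2 * a2 := Nat.mul_le_mul (by omega) (le_refl a2)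
      exact le_trans (by linarith) (le_max_left _ _)
  have hC3 : a3 < max ((x21 + s1) * a1 + s2 * a2) (s1 * a1 + (x12 + s2) * a2) := by
    obtain ⟨x, y, hmod, hxl, hyl, hexc⟩ := RED 1
    have hwle := WLE x y hxl hyl hexc
    have hmod' : Nat.ModEq a3 (x * a1 + y * a2) 1 := hmod
    have hw1 : 1 ≤ x * a1 + y * a2 := by
      rcases Nat.eq_zero_or_pos (x * a1 + y * a2) with h0 | h0
      · exfalso
        rw [h0, Nat.zero_mod, Nat.mod_eq_of_lt (by omega)] at hmod
        omega
      · exact h0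
    obtain ⟨k, hk⟩ := (Nat.modEq_iff_dvd' hw1).mp hmod'.symm
    have hweq : x * a1 + y * a2 = a3 * k + 1 := (Nat.sub_eq_iff_eq_add hw1).mp hk
    have hkpos : 0 < k := by
      rcases Nat.eq_zero_or_pos k with h0 | h0
      · exfalso
        rw [h0, Nat.mul_zero, Nat.zero_add] at hweq
        rcases Nat.eq_zero_or_pos x with hx0 | hx0
        · rw [hx0, Nat.zero_mul, Nat.zero_add] at hweq
          have hdd : a2 ∣ 1 := ⟨y, by linarith [hweq]⟩
          have := Nat.le_of_dvd one_pos hdd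
          omega
        · have h1 : 1 * a1 ≤ x * a1 := Nat.mul_le_mul hx0 (le_refl a1)
          linarith [hweq, Nat.zero_le (y * a2)]
      · exact h0
    have h2 : a3 * 1 ≤ a3 * k := Nat.mul_le_mul (le_refl a3) hkpos
    linarith [hwle, hweq, h2]
  have hchoice := max_choice ((x21 + s1) * a1 + s2 * a2) (s1 * a1 + (x12 + s2) * a2)
  rw [hval, Nat.add_sub_add_left]
  constructor
  · -- the value is not representable
    intro hcon
    obtain ⟨y1, y2, y3, hy⟩ := hcon
    have h6 : max ((x21 + s1) * a1 + s2 * a2) (s1 * a1 + (x12 + s2) * a2) - a3 + a3 =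
        max ((x21 + s1) * a1 + s2 * a2) (s1 * a1 + (x12 + s2) * a2) := Nat.sub_add_cancel hC3.le
    have hsum : max ((x21 + s1) * a1 + s2 * a2) (s1 * a1 + (x12 + s2) * a2) =
        y1 * a1 + y2 * a2 + y3 * a3 + a3 := by
      rw [← h6, hy]
    rcases hchoice with hch | hch
    · refine INJ (x21 + s1) s2 y1 y2 (y3 + 1) (by omega) (by omega) (Or.inr (by omega))
        (by omega) ?_
      have h9 : (x21 + s1) * a1 + s2 * a2 = y1 * a1 + y2 * a2 + y3 * a3 + a3 := by
        rw [← hch]; exact hsum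
      linarith [h9]
    · refine INJ s1 (x12 + s2) y1 y2 (y3 + 1) (by omega) (by omega) (Or.inl (by omega))
        (by omega) ?_
      have h9 : s1 * a1 + (x12 + s2) * a2 = y1 * a1 + y2 * a2 + y3 * a3 + a3 := by
        rw [← hch]; exact hsum
      linarith [h9]
  · -- it is an upper bound
    intro z hz
    by_contra hcon
    push_neg at hcon
    obtain ⟨x, y, hmod, hxl, hyl, hexc⟩ := RED z
    have hwle := WLE x y hxl hyl hexc
    rcases le_or_gt (x * a1 + y * a2) z with hle | hgt
    · have hmod' : Nat.ModEq a3 (x * a1 + y * a2) z := hmod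
      obtain ⟨k, hk⟩ := (Nat.modEq_iff_dvd' hle).mp hmod'
      have hzeq : z = a3 * k + (x * a1 + y * a2) := (Nat.sub_eq_iff_eq_add hle).mp hk
      exact hz ⟨x, y, k, by linarith [hzeq]⟩
    · have hmod' : Nat.ModEq a3 z (x * a1 + y * a2) := hmod.symm
      have hdvd := (Nat.modEq_iff_dvd' hgt.le).mp hmod'
      have hlea3 : a3 ≤ x * a1 + y * a2 - z := Nat.le_of_dvd (Nat.sub_pos_of_lt hgt) hdvd
      have h8 : max ((x21 + s1) * a1 + s2 * a2) (s1 * a1 + (x12 + s2) * a2) < a3 + z :=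
        by have := (Nat.sub_lt_iff_lt_add hC3.le).mp hcon; omega
      have h7 : x * a1 + y * a2 - z < a3 :=
        (Nat.sub_lt_iff_lt_add hgt.le).mpr (by linarith [hwle, h8])
      exact absurd hlea3 (not_le.mpr h7)
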